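/- Let 𝓛 be a nonempty convex subset of a Coxeter group W, let u ∈ W, let i ∈ I, and let β be a transmitting root of Str(Sep(u)). If there exist real numbers a, a' > 0 such that a·uβ + a'·α_i ∈ Φ, then τ_i(u) = s_i u. -/
import Mathlib


open scoped Classical

noncomputable section

namespace BKBilliards

variable {I : Type*} [Fintype I] [DecidableEq I]
variable {M : CoxeterMatrix I} {W : Type*} [Group W]

/-- The simple root indexed by `i`, i.e. the `i`-th standard basis vector of `ℝ^I`. -/
def sroot (i : I) : I → ℝ := Pi.single i 1

/-- The data `(ρ, B)` constitutes the standard geometric representation of the Coxeter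
system `cs`, together with its induced symmetric bilinear form (with `μ = 1` on all
pairs whose Coxeter matrix entry is `∞`, encoded as `0`). -/
structure IsGeometric (cs : CoxeterSystem M W) (ρ : Representation ℝ W (I → ℝ))
    (B : LinearMap.BilinForm ℝ (I → ℝ)) : Prop where
  /-- `B(αᵢ, αᵢ') = -cos (π / m i i')` when `m i i' ≠ ∞`. -/
  form_apply_of_ne_zero : ∀ i i' : I, M i i' ≠ 0 →
    B (sroot i) (sroot i') = - Real.cos (Real.pi / (M i i' : ℝ))
  /-- `B(αᵢ, αᵢ') = -1` when `m i i' = ∞` (encoded as `0`). -/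
  form_apply_of_eq_zero : ∀ i i' : I, M i i' = 0 → B (sroot i) (sroot i') = -1
  /-- Each simple reflection acts by the reflection formula. -/
  simple_apply : ∀ (i : I) (v : I → ℝ), ρ (cs.simple i) v = v - (2 * B v (sroot i)) • sroot i

variable (ρ : Representation ℝ W (I → ℝ))

/-- The root system `Φ = {w αᵢ : w ∈ W, i ∈ I}`. -/
def Phi : Set (I → ℝ) := {v | ∃ (w : W) (i : I), v = ρ w (sroot i)}

/-- The half-space `H_β⁺ = {w ∈ W : w β ∈ Φ⁺}`: for a root `β`, membership amounts to
`w β` being a nonnegative combination of the simple roots. -/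
def Hplus (β : I → ℝ) : Set W := {w : W | 0 ≤ ρ w β}

/-- `R(𝓛) = {β ∈ Φ : 𝓛 ⊆ H_β⁺}`. -/
def RL (L : Set W) : Set (I → ℝ) := {β | β ∈ Phi ρ ∧ ∀ w ∈ L, w ∈ Hplus ρ β}

/-- `𝓛` is convex if it equals the intersection of all half-spaces containing it. -/
def IsConvex (L : Set W) : Prop := ∀ u : W, (∀ β ∈ RL ρ L, u ∈ Hplus ρ β) → u ∈ L

/-- The set of separators of `u`: `Sep(u) = {β ∈ R(𝓛) : u β ∈ Φ⁻}`. -/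
def Sep (L : Set W) (u : W) : Set (I → ℝ) := {β | β ∈ RL ρ L ∧ ρ u β ≤ 0}

variable (cs : CoxeterSystem M W)

/-- The noninvertible Bender–Knuth toggle `τᵢ` associated to the convex set `𝓛`. -/
def toggle (L : Set W) (i : I) (u : W) : W :=
  if ρ u⁻¹ (sroot i) ∈ RL ρ L then u else cs.simple i * u

/-- For a word `𝗐 = i_M ⋯ i_1` (a list whose head is `i_M`), the composition
`τ_𝗐 = τ_{i_M} ⋯ τ_{i_1}`. -/
def toggleWord (L : Set W) (l : List I) (u : W) : W :=
  l.foldr (fun i v => toggle ρ cs L i v) u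

/-- `β` dominates `β'` if `H_β⁺ ⊇ H_{β'}⁺`. -/
def Dominates (β β' : I → ℝ) : Prop := Hplus ρ β' ⊆ Hplus ρ β

/-- A small root: a positive root dominating no positive root other than itself. -/
def IsSmall (β : I → ℝ) : Prop :=
  β ∈ Phi ρ ∧ 0 ≤ β ∧ ∀ β', β' ∈ Phi ρ → 0 ≤ β' → Dominates ρ β β' → β' = β

/-- `β` is a transmitting root of the stratum `Str(R)`:
`β ∈ R(𝓛)` and `β = -w⁻¹ αᵢ` for some `w` with `Sep(w) = R` and some `i ∈ I`. -/
def IsTransmitting (L : Set W) (R : Set (I → ℝ)) (β : I → ℝ) : Prop :=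
  β ∈ RL ρ L ∧ ∃ (w : W) (i : I), Sep ρ L w = R ∧ β = - ρ w⁻¹ (sroot i)

end BKBilliards

open BKBilliards

namespace BKAux

open BKBilliards CoxeterSystem

set_option linter.unusedSectionVars false

variable {I : Type*} [Fintype I] [DecidableEq I]
variable {M : CoxeterMatrix I} {W : Type*} [Group W]
variable {cs : CoxeterSystem M W} {ρ : Representation ℝ W (I → ℝ)}
variable {B : LinearMap.BilinForm ℝ (I → ℝ)}

theorem eq_sum_sroot (x : I → ℝ) : x = ∑ k, x k • sroot k := by
  funext l
  simp [sroot, Finset.sum_apply, Pi.single_apply]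

theorem B_base_symm (hg : IsGeometric cs ρ B) (k l : I) :
    B (sroot k) (sroot l) = B (sroot l) (sroot k) := by
  by_cases h : M k l = 0
  · rw [hg.form_apply_of_eq_zero k l h, hg.form_apply_of_eq_zero l k (by rwa [M.symmetric l k])]
  · rw [hg.form_apply_of_ne_zero k l h, hg.form_apply_of_ne_zero l k (by rwa [M.symmetric l k]),
      M.symmetric l k]

theorem B_symm (hg : IsGeometric cs ρ B) (x y : I → ℝ) : B x y = B y x := by
  rw [eq_sum_sroot x, eq_sum_sroot y]
  simp only [map_sum, LinearMap.sum_apply, map_smul, LinearMap.smul_apply, smul_eq_mul,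
    Finset.mul_sum]
  rw [Finset.sum_comm]
  refine Finset.sum_congr rfl fun k _ => Finset.sum_congr rfl fun l _ => ?_
  rw [B_base_symm hg l k]
  ring

theorem B_diag (hg : IsGeometric cs ρ B) (k : I) : B (sroot k) (sroot k) = 1 := by
  rw [hg.form_apply_of_ne_zero k k (by rw [M.diagonal]; norm_num), M.diagonal]
  norm_num

theorem B_simple_invariant (hg : IsGeometric cs ρ B) (k : I) (x y : I → ℝ) :
    B (ρ (cs.simple k) x) (ρ (cs.simple k) y) = B x y := by
  rw [hg.simple_apply, hg.simple_apply]
  simp only [map_sub, map_smul, LinearMap.sub_apply, LinearMap.smul_apply, smul_eq_mul]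
  rw [B_diag hg k, B_symm hg (sroot k) y]
  ring

theorem B_invariant (hg : IsGeometric cs ρ B) (w : W) (x y : I → ℝ) :
    B (ρ w x) (ρ w y) = B x y := by
  obtain ⟨ω, rfl⟩ := cs.wordProd_surjective w
  induction ω with
  | nil => simp
  | cons k ω ih =>
      rw [cs.wordProd_cons, map_mul]
      simp only [Module.End.mul_apply]
      rw [B_simple_invariant hg, ih]

theorem rho_inv_apply (w : W) (x : I → ℝ) : ρ w (ρ w⁻¹ x) = x := by
  have : ρ w * ρ w⁻¹ = 1 := by rw [← map_mul, mul_inv_cancel, map_one]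
  calc ρ w (ρ w⁻¹ x) = (ρ w * ρ w⁻¹) x := rfl
    _ = x := by rw [this]; rfl

theorem rho_rho_apply (w w' : W) (x : I → ℝ) : ρ w (ρ w' x) = ρ (w * w') x := by
  rw [map_mul]; rfl

theorem smul_mem_Phi {v : I → ℝ} (hv : v ∈ Phi ρ) (w : W) : ρ w v ∈ Phi ρ := by
  obtain ⟨w', k, rfl⟩ := hv
  exact ⟨w * w', k, rho_rho_apply (ρ := ρ) w w' (sroot k)⟩

theorem B_root_self (hg : IsGeometric cs ρ B) {v : I → ℝ} (hv : v ∈ Phi ρ) : B v v = 1 := by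
  obtain ⟨w, k, rfl⟩ := hv
  rw [B_invariant hg, B_diag hg]

theorem root_ne_zero (hg : IsGeometric cs ρ B) {v : I → ℝ} (hv : v ∈ Phi ρ) : v ≠ 0 := by
  intro h
  have := B_root_self hg hv
  rw [h] at this
  simp at this

end BKAux

/-- Chebyshev-like sequence: `cheb c 0 = 0`, `cheb c 1 = 1`,
`cheb c (n+2) = 2c · cheb c (n+1) - cheb c n`. -/
noncomputable def cheb (c : ℝ) : ℕ → ℝ
  | 0 => 0
  | 1 => 1
  | (n+2) => 2*c*cheb c (n+1) - cheb c n

theorem cheb_one (k : ℕ) : cheb 1 k = k := by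
  induction k using Nat.strong_induction_on with
  | _ k ih =>
    match k with
    | 0 => simp [cheb]
    | 1 => simp [cheb]
    | (n+2) =>
        rw [cheb, ih (n+1) (by omega), ih n (by omega)]
        push_cast
        ring

theorem cheb_cos (θ : ℝ) (k : ℕ) : cheb (Real.cos θ) k * Real.sin θ = Real.sin (k * θ) := by
  induction k using Nat.strong_induction_on with
  | _ k ih =>
    match k with
    | 0 => simp [cheb]
    | 1 => simp [cheb]
    | (n+2) =>
        rw [cheb, sub_mul, mul_assoc, mul_assoc, ih (n+1) (by omega), ih n (by omega)]
        have h1 : ((n+2 : ℕ) : ℝ) * θ = ((n+1 : ℕ) : ℝ) * θ + θ := by push_cast; ring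
        have h2 : ((n : ℕ) : ℝ) * θ = ((n+1 : ℕ) : ℝ) * θ - θ := by push_cast; ring
        rw [h1, h2, Real.sin_add, Real.sin_sub]
        ring

theorem cheb_nonneg {m : ℕ} (hm : 2 ≤ m) {k : ℕ} (hk : k ≤ m) :
    0 ≤ cheb (Real.cos (Real.pi / m)) k := by
  have hmpos : (0:ℝ) < m := by positivity
  have hθpos : 0 < Real.pi / m := by positivity
  have hθle : Real.pi / m ≤ Real.pi := by
    apply div_le_self Real.pi_pos.le
    exact_mod_cast Nat.one_le_of_lt hm
  have hsin : 0 < Real.sin (Real.pi / m) := by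
    apply Real.sin_pos_of_pos_of_lt_pi hθpos
    calc Real.pi / m ≤ Real.pi / 2 := by
          apply div_le_div_of_nonneg_left Real.pi_pos.le (by norm_num)
          exact_mod_cast hm
      _ < Real.pi := by linarith [Real.pi_pos]
  have h := cheb_cos (Real.pi / m) k
  have hsk : 0 ≤ Real.sin (k * (Real.pi / m)) := by
    apply Real.sin_nonneg_of_nonneg_of_le_pi
    · positivity
    · calc (k:ℝ) * (Real.pi / m) ≤ m * (Real.pi / m) := by
            apply mul_le_mul_of_nonneg_right _ hθpos.le
            exact_mod_cast hk
        _ = Real.pi := by field_simp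
  nlinarith [h, hsin, hsk]

namespace BKAux2

open BKBilliards CoxeterSystem

set_option linter.unusedSectionVars false

variable {I : Type*} [Fintype I] [DecidableEq I]
variable {M : CoxeterMatrix I} {W : Type*} [Group W]
variable {cs : CoxeterSystem M W} {ρ : Representation ℝ W (I → ℝ)}
variable {B : LinearMap.BilinForm ℝ (I → ℝ)}

open BKAux

/-- The coefficients of `π(alternatingWord i j n) · αᵢ` in terms of the Chebyshev sequence. -/
theorem alt_apply_sroot (hg : IsGeometric cs ρ B) {i j : I} (hij : i ≠ j) (n : ℕ)
    (c : ℝ) (hc : B (sroot i) (sroot j) = -c) :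
    ρ (cs.wordProd (alternatingWord i j n)) (sroot i) =
      (if Even n then cheb c (n+1) else cheb c n) • sroot i +
      (if Even n then cheb c n else cheb c (n+1)) • sroot j := by
  have hcji : B (sroot j) (sroot i) = -c := by rw [B_base_symm hg j i, hc]
  have hii : B (sroot i) (sroot i) = 1 := B_diag hg i
  have hjj : B (sroot j) (sroot j) = 1 := B_diag hg j
  induction n with
  | zero => simp [cheb, alternatingWord]
  | succ n ih =>
      rw [alternatingWord_succ', cs.wordProd_cons, map_mul, Module.End.mul_apply, ih]
      by_cases hn : Even n
      · have hn1 : ¬ Even (n+1) := by simp [Nat.even_add_one, hn]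
        simp only [hn, hn1, if_true, if_false]
        rw [hg.simple_apply]
        simp only [map_add, map_smul, LinearMap.add_apply, LinearMap.smul_apply, smul_eq_mul,
          hii, hjj, hc, hcji]
        have : cheb c (n+2) = 2*c*cheb c (n+1) - cheb c n := rfl
        funext l
        simp only [Pi.add_apply, Pi.sub_apply, Pi.smul_apply, smul_eq_mul, this]
        ring
      · have hn1 : Even (n+1) := Nat.even_add_one.mpr hn
        simp only [hn, hn1, if_true, if_false]
        rw [hg.simple_apply]
        simp only [map_add, map_smul, LinearMap.add_apply, LinearMap.smul_apply, smul_eq_mul,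
          hii, hjj, hc, hcji]
        have : cheb c (n+2) = 2*c*cheb c (n+1) - cheb c n := rfl
        funext l
        simp only [Pi.add_apply, Pi.sub_apply, Pi.smul_apply, smul_eq_mul, this]
        ring

/-- Dihedral positivity: if `n < M i j` or `M i j = 0`, the coefficients are nonnegative. -/
theorem alt_apply_sroot_nonneg (hg : IsGeometric cs ρ B) {i j : I} (hij : i ≠ j) (n : ℕ)
    (hn : M.M i j = 0 ∨ n + 1 ≤ M.M i j) :
    ∃ lam mu : ℝ, 0 ≤ lam ∧ 0 ≤ mu ∧
      ρ (cs.wordProd (alternatingWord i j n)) (sroot i) = lam • sroot i + mu • sroot j := by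
  rcases hn with hn | hn
  · refine ⟨_, _, ?_, ?_, alt_apply_sroot hg hij n 1 (by rw [hg.form_apply_of_eq_zero i j hn])⟩
    · split <;> (rw [cheb_one]; positivity)
    · split <;> (rw [cheb_one]; positivity)
  · have hm0 : M.M i j ≠ 0 := by omega
    have hm2 : 2 ≤ M.M i j := by
      have := M.off_diagonal i j hij
      omega
    have hc : B (sroot i) (sroot j) = -Real.cos (Real.pi / (M.M i j : ℝ)) :=
      hg.form_apply_of_ne_zero i j hm0
    refine ⟨_, _, ?_, ?_, alt_apply_sroot hg hij n _ hc⟩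
    · split
      · exact cheb_nonneg hm2 (by omega)
      · exact cheb_nonneg hm2 (by omega)
    · split
      · exact cheb_nonneg hm2 (by omega)
      · exact cheb_nonneg hm2 (by omega)

end BKAux2

namespace BKAux3

open BKBilliards CoxeterSystem BKAux

set_option linter.unusedSectionVars false
set_option maxHeartbeats 1000000

variable {I : Type*} [Fintype I] [DecidableEq I]
variable {M : CoxeterMatrix I} {W : Type*} [Group W]
variable {cs : CoxeterSystem M W} {ρ : Representation ℝ W (I → ℝ)}
variable {B : LinearMap.BilinForm ℝ (I → ℝ)}

theorem alt_decomp (i j : I) (t k : ℕ) :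
    ∃ pre : List I, pre.length = k ∧
      alternatingWord i j (t + k) = pre ++ alternatingWord i j t := by
  induction k with
  | zero => exact ⟨[], rfl, rfl⟩
  | succ k ih =>
      obtain ⟨pre, hlen, hdec⟩ := ih
      refine ⟨(if Even (t + k) then j else i) :: pre, by simp [hlen], ?_⟩
      rw [show t + (k+1) = (t + k) + 1 from rfl, alternatingWord_succ', hdec]
      rfl

theorem sroot_nonneg (i : I) : (0 : I → ℝ) ≤ sroot i := by
  intro l
  simp only [sroot, Pi.zero_apply, Pi.single_apply]
  split <;> norm_num

theorem rho_one_sroot (i : I) : ρ (1 : W) (sroot i) = sroot i := by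
  rw [map_one]; rfl

theorem key_pos (hg : IsGeometric cs ρ B) :
    ∀ (N : ℕ) (w : W) (i : I), cs.length w ≤ N →
      cs.length w < cs.length (w * cs.simple i) → 0 ≤ ρ w (sroot i) := by
  intro N
  induction N with
  | zero =>
      intro w i hw _
      have hw1 : w = 1 := cs.length_eq_zero_iff.mp (Nat.le_zero.mp hw)
      subst hw1
      rw [rho_one_sroot]
      exact sroot_nonneg i
  | succ N ih =>
      intro w i hw hlen
      by_cases hw1 : w = 1
      · subst hw1
        rw [rho_one_sroot]
        exact sroot_nonneg i
      have hwpos : 1 ≤ cs.length w :=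
        Nat.one_le_iff_ne_zero.mpr (fun h => hw1 (cs.length_eq_zero_iff.mp h))
      obtain ⟨j, hj⟩ := cs.exists_rightDescent_of_ne_one hw1
      have hj' : cs.length (w * cs.simple j) < cs.length w := hj
      have hij : i ≠ j := by
        rintro rfl
        omega
      -- the predicate P
      set P : ℕ → Prop :=
        fun n => cs.length (w * (cs.wordProd (alternatingWord i j n))⁻¹) + n = cs.length w
        with hP
      have hP1 : P 1 := by
        have halt1 : alternatingWord i j 1 = [j] := rfl
        have := cs.length_mul_simple w j
        simp only [hP, halt1, wordProd_singleton, inv_simple]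
        omega
      set n := Nat.findGreatest P (cs.length w) with hn
      have hPn : P n := Nat.findGreatest_spec hwpos hP1
      have hn1 : 1 ≤ n := Nat.le_findGreatest hwpos hP1
      have hnle : n ≤ cs.length w := Nat.findGreatest_le _
      set x := w * (cs.wordProd (alternatingWord i j n))⁻¹ with hxdef
      have hx : cs.length x + n = cs.length w := hPn
      have hwx : x * cs.wordProd (alternatingWord i j n) = w := by
        rw [hxdef, inv_mul_cancel_right]
      -- P holds below n
      have hPt : ∀ t, t ≤ n → P t := by
        intro t ht
        obtain ⟨k, hk⟩ : ∃ k, n = t + k := ⟨n - t, by omega⟩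
        obtain ⟨pre, hprelen, hdec⟩ := alt_decomp i j t k
        rw [← hk] at hdec
        have hupper : cs.length (w * (cs.wordProd (alternatingWord i j t))⁻¹)
            ≤ cs.length x + k := by
          have heq : w * (cs.wordProd (alternatingWord i j t))⁻¹ = x * cs.wordProd pre := by
            rw [← hwx, hdec, wordProd_append, mul_assoc, mul_inv_cancel_right]
          rw [heq]
          have h1 := cs.length_mul_le x (cs.wordProd pre)
          have h2 := cs.length_wordProd_le pre
          omega
        have hlower : cs.length w - t
            ≤ cs.length (w * (cs.wordProd (alternatingWord i j t))⁻¹) := by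
          have h1 := cs.length_mul_ge_length_sub_length w
            (cs.wordProd (alternatingWord i j t))⁻¹
          have h2 : cs.length (cs.wordProd (alternatingWord i j t))⁻¹ ≤ t := by
            rw [cs.length_inv]
            have := cs.length_wordProd_le (alternatingWord i j t)
            rwa [length_alternatingWord] at this
          omega
        show cs.length (w * (cs.wordProd (alternatingWord i j t))⁻¹) + t = cs.length w
        omega
      -- exclude n ≥ M i j when M i j ≠ 0
      have hsmall : M.M i j = 0 ∨ n + 1 ≤ M.M i j := by
        by_contra hcon
        push_neg at hcon
        obtain ⟨hm0, hmn⟩ := hcon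
        have hmle : M.M i j ≤ n := by omega
        have hm1 : 1 ≤ M.M i j := by
          rcases Nat.eq_zero_or_pos (M.M i j) with h | h
          · exact absurd h hm0
          · exact h
        have hPm : cs.length (w * (cs.wordProd (alternatingWord i j (M.M i j)))⁻¹) + M.M i j
            = cs.length w := hPt (M.M i j) hmle
        have hbraid : cs.wordProd (alternatingWord i j (M.M i j))
            = cs.wordProd (alternatingWord j i (M.M i j)) := by
          have h := cs.wordProd_braidWord_eq j i
          rw [CoxeterSystem.braidWord, CoxeterSystem.braidWord, M.symmetric j i] at h
          exact h.symm
        have hconcat : alternatingWord j i (M.M i j)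
            = (alternatingWord i j (M.M i j - 1)).concat i := by
          conv_lhs => rw [show M.M i j = (M.M i j - 1) + 1 by omega]
          exact alternatingWord_succ j i (M.M i j - 1)
        have hprod : cs.wordProd (alternatingWord i j (M.M i j))
            = cs.wordProd (alternatingWord i j (M.M i j - 1)) * cs.simple i := by
          rw [hbraid, hconcat, wordProd_concat]
        have h5 : cs.wordProd (alternatingWord i j (M.M i j - 1))
            = cs.wordProd (alternatingWord i j (M.M i j)) * cs.simple i := by
          rw [hprod, cs.simple_mul_simple_cancel_right]
        have hwsi : w * cs.simple i
            = (w * (cs.wordProd (alternatingWord i j (M.M i j)))⁻¹)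
              * cs.wordProd (alternatingWord i j (M.M i j - 1)) := by
          rw [h5, ← mul_assoc, inv_mul_cancel_right]
        have hle : cs.length (w * cs.simple i)
            ≤ cs.length (w * (cs.wordProd (alternatingWord i j (M.M i j)))⁻¹)
              + (M.M i j - 1) := by
          rw [hwsi]
          have h1 := cs.length_mul_le (w * (cs.wordProd (alternatingWord i j (M.M i j)))⁻¹)
            (cs.wordProd (alternatingWord i j (M.M i j - 1)))
          have h2 := cs.length_wordProd_le (alternatingWord i j (M.M i j - 1))
          rw [length_alternatingWord] at h2
          omega
        omega
      -- the "next letter" increases the length of x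
      have hnext : ∀ k₁ : I, alternatingWord i j (n+1) = k₁ :: alternatingWord i j n →
          cs.length x < cs.length (x * cs.simple k₁) := by
        intro k₁ hk₁
        have hxk : w * (cs.wordProd (alternatingWord i j (n+1)))⁻¹ = x * cs.simple k₁ := by
          rw [hk₁, wordProd_cons, mul_inv_rev, inv_simple, ← mul_assoc, ← hxdef]
        have hne := cs.length_mul_simple_ne x k₁
        rcases cs.length_mul_simple x k₁ with hup | hdown
        · omega
        · exfalso
          have hPn1 : P (n+1) := by
            show cs.length (w * (cs.wordProd (alternatingWord i j (n+1)))⁻¹) + (n+1)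
              = cs.length w
            rw [hxk]
            omega
          have hbound : n + 1 ≤ cs.length w := by
            have h := hPn1
            simp only [hP] at h
            omega
          exact Nat.findGreatest_is_greatest (by omega) hbound hPn1
      -- the "previous letter" also increases the length of x
      obtain ⟨t, hnt⟩ : ∃ t, n = t + 1 := ⟨n - 1, by omega⟩
      have hprev : cs.length x < cs.length (x * cs.simple (if Even t then j else i)) := by
        have hk₂ : alternatingWord i j n
            = (if Even t then j else i) :: alternatingWord i j t := by
          rw [hnt, alternatingWord_succ']
        have hxk : x * cs.simple (if Even t then j else i)
            = w * (cs.wordProd (alternatingWord i j t))⁻¹ := by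
          rw [hxdef, hk₂, wordProd_cons, mul_inv_rev, inv_simple, ← mul_assoc,
            cs.simple_mul_simple_cancel_right]
        have hPt' : cs.length (w * (cs.wordProd (alternatingWord i j t))⁻¹) + t
            = cs.length w := hPt t (by omega)
        rw [hxk]
        omega
      have hnexts : cs.length x < cs.length (x * cs.simple (if Even n then j else i)) := by
        apply hnext
        rw [alternatingWord_succ']
      have hEvenIff : Even n ↔ ¬ Even t := by
        rw [hnt, Nat.even_add_one]
      have hxi : cs.length x < cs.length (x * cs.simple i) := by
        by_cases hev : Even t
        · have : ¬ Even n := by rw [hEvenIff]; exact not_not_intro hev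
          simpa [this] using hnexts
        · simpa [hev] using hprev
      have hxj : cs.length x < cs.length (x * cs.simple j) := by
        by_cases hev : Even t
        · simpa [hev] using hprev
        · have : Even n := hEvenIff.mpr hev
          simpa [this] using hnexts
      -- induction hypothesis applies to x
      have hxN : cs.length x ≤ N := by omega
      have hxipos := ih x i hxN hxi
      have hxjpos := ih x j hxN hxj
      -- coefficients
      obtain ⟨lam, mu, hlam, hmu, hcoef⟩ := BKAux2.alt_apply_sroot_nonneg hg hij n hsmall
      rw [← hwx, ← rho_rho_apply, hcoef]
      intro l
      simp only [map_add, map_smul, Pi.add_apply, Pi.smul_apply, smul_eq_mul, Pi.zero_apply]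
      have h1 := hxipos l
      have h2 := hxjpos l
      simp only [Pi.zero_apply] at h1 h2
      exact add_nonneg (mul_nonneg hlam h1) (mul_nonneg hmu h2)

theorem root_dichotomy (hg : IsGeometric cs ρ B) (w : W) (i : I) :
    0 ≤ ρ w (sroot i) ∨ ρ w (sroot i) ≤ 0 := by
  rcases cs.length_mul_simple w i with hup | hdown
  · left
    exact key_pos hg (cs.length w) w i le_rfl (by omega)
  · right
    set w' := w * cs.simple i with hw'
    have hcancel : w' * cs.simple i = w := by
      rw [hw']
      exact cs.simple_mul_simple_cancel_right i
    have hlen : cs.length w' < cs.length (w' * cs.simple i) := by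
      rw [hcancel]
      omega
    have hpos := key_pos hg (cs.length w') w' i le_rfl hlen
    have hsi : ρ (cs.simple i) (sroot i) = -sroot i := by
      rw [hg.simple_apply, B_diag hg]
      funext l
      simp only [Pi.sub_apply, Pi.smul_apply, Pi.neg_apply, smul_eq_mul]
      ring
    have heq : ρ w (sroot i) = -(ρ w' (sroot i)) := by
      rw [← hcancel, ← rho_rho_apply, hsi, map_neg]
    rw [heq]
    intro l
    simp only [Pi.neg_apply, Pi.zero_apply]
    have := hpos l
    simp only [Pi.zero_apply] at this
    linarith

theorem Phi_dichotomy (hg : IsGeometric cs ρ B) {v : I → ℝ} (hv : v ∈ Phi ρ) :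
    0 ≤ v ∨ v ≤ 0 := by
  obtain ⟨w, k, rfl⟩ := hv
  exact root_dichotomy hg w k

end BKAux3

section MainAux

open BKBilliards CoxeterSystem BKAux BKAux3

set_option linter.unusedSectionVars false

variable {I : Type*} [Fintype I] [DecidableEq I]
variable {M : CoxeterMatrix I} {W : Type*} [Group W]
variable {cs : CoxeterSystem M W} {ρ : Representation ℝ W (I → ℝ)}
variable {B : LinearMap.BilinForm ℝ (I → ℝ)}

theorem rho_inv_apply' (w : W) (x : I → ℝ) : ρ w⁻¹ (ρ w x) = x := by
  have := rho_inv_apply (ρ := ρ) w⁻¹ x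
  rwa [inv_inv] at this

theorem sroot_not_nonpos (i : I) : ¬ (sroot i ≤ (0 : I → ℝ)) := by
  intro h
  have := h i
  simp only [sroot, Pi.single_eq_same, Pi.zero_apply] at this
  linarith

theorem sroot_mem_Phi (i : I) : sroot i ∈ Phi ρ := ⟨1, i, (rho_one_sroot i).symm⟩

end MainAux

open BKBilliards CoxeterSystem BKAux BKAux3 in
/-- If `β` is a transmitting root of `Str(Sep(u))` and there exist
`a, a' > 0` with `a·uβ + a'·αᵢ ∈ Φ`, then `τᵢ(u) = sᵢ u`. -/
theorem toggle_of_pos_combination_root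
    {I : Type*} [Fintype I] [DecidableEq I] {M : CoxeterMatrix I} {W : Type*} [Group W]
    (cs : CoxeterSystem M W) (ρ : Representation ℝ W (I → ℝ))
    (B : LinearMap.BilinForm ℝ (I → ℝ)) (hgeom : IsGeometric cs ρ B)
    (L : Set W) (hL : L.Nonempty) (hconv : IsConvex ρ L)
    (u : W) (i : I) (β : I → ℝ)
    (hβ : IsTransmitting ρ L (Sep ρ L u) β)
    (a a' : ℝ) (ha : 0 < a) (ha' : 0 < a')
    (hroot : a • ρ u β + a' • sroot i ∈ Phi ρ) :
    toggle ρ cs L i u = cs.simple i * u := by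
  have hnot : ρ u⁻¹ (sroot i) ∉ RL ρ L := by
    intro hcond
    obtain ⟨hβRL, w, j, hSep, hβeq⟩ := hβ
    have hβPhi : β ∈ Phi ρ := hβRL.1
    have hwβ : ρ w β = -(sroot j) := by
      rw [hβeq, map_neg, rho_inv_apply]
    have hβSepw : β ∈ Sep ρ L w := by
      refine ⟨hβRL, ?_⟩
      rw [hwβ]
      exact neg_nonpos.mpr (sroot_nonneg j)
    have hβSepu : β ∈ Sep ρ L u := hSep ▸ hβSepw
    have huβ : ρ u β ≤ 0 := hβSepu.2
    have hui : ρ u⁻¹ (sroot i) ∈ Phi ρ := ⟨u⁻¹, i, rfl⟩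
    have hui_nSep : ρ u⁻¹ (sroot i) ∉ Sep ρ L u := by
      intro hmem
      have h2 := hmem.2
      rw [rho_inv_apply] at h2
      exact sroot_not_nonpos i h2
    -- the common final contradiction
    have final : ρ u⁻¹ (sroot i) = -β → False := by
      intro heq
      obtain ⟨v, hv⟩ := hL
      have h1 : (0 : I → ℝ) ≤ ρ v β := hβRL.2 v hv
      have h2 : (0 : I → ℝ) ≤ ρ v (ρ u⁻¹ (sroot i)) := hcond.2 v hv
      rw [heq, map_neg] at h2
      have h0 : ρ v β = 0 := le_antisymm (neg_nonneg.mp h2) h1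
      exact root_ne_zero hgeom (smul_mem_Phi hβPhi v) h0
    rcases Phi_dichotomy hgeom hroot with hpos | hneg
    · -- δ ≥ 0 : then uβ = -αᵢ
      have hkzero : ∀ k, k ≠ i → ρ u β k = 0 := by
        intro k hk
        have h1 := hpos k
        have h2 := huβ k
        simp only [Pi.add_apply, Pi.smul_apply, Pi.zero_apply, smul_eq_mul, sroot,
          Pi.single_eq_of_ne hk] at h1 h2 ⊢
        nlinarith
      have hnorm : B (ρ u β) (ρ u β) = 1 := B_root_self hgeom (smul_mem_Phi hβPhi u)
      have huβeq : ρ u β = (ρ u β i) • sroot i := by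
        funext k
        by_cases hk : k = i
        · subst hk
          simp [sroot, Pi.single_eq_same]
        · simp [sroot, Pi.single_eq_of_ne hk, hkzero k hk]
      rw [huβeq] at hnorm
      simp only [map_smul, LinearMap.smul_apply, smul_eq_mul, B_diag hgeom i] at hnorm
      have ht : ρ u β i ≤ 0 := by
        have := huβ i
        simpa using this
      have htm1 : ρ u β i = -1 := by nlinarith
      have huβeq2 : ρ u β = -(sroot i) := by
        rw [huβeq, htm1]
        funext k
        simp
      have hfin : β = -(ρ u⁻¹ (sroot i)) := by
        have h3 := congrArg (ρ u⁻¹) huβeq2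
        rw [rho_inv_apply', map_neg] at h3
        exact h3
      exact final (by rw [hfin, neg_neg])
    · -- δ ≤ 0 : then η := w u⁻¹ αᵢ equals α_j
      have hinvu : ρ u⁻¹ (a • ρ u β + a' • sroot i)
          = a • β + a' • ρ u⁻¹ (sroot i) := by
        rw [map_add, map_smul, map_smul, rho_inv_apply']
      have hγPhi : a • β + a' • ρ u⁻¹ (sroot i) ∈ Phi ρ := by
        rw [← hinvu]
        exact smul_mem_Phi hroot u⁻¹
      have hγRL : a • β + a' • ρ u⁻¹ (sroot i) ∈ RL ρ L := by
        refine ⟨hγPhi, fun v hv => ?_⟩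
        show (0 : I → ℝ) ≤ ρ v (a • β + a' • ρ u⁻¹ (sroot i))
        rw [map_add, map_smul, map_smul]
        intro l
        have h1 : (0 : I → ℝ) ≤ ρ v β := hβRL.2 v hv
        have h2 : (0 : I → ℝ) ≤ ρ v (ρ u⁻¹ (sroot i)) := hcond.2 v hv
        have h1l := h1 l
        have h2l := h2 l
        simp only [Pi.zero_apply] at h1l h2l
        simp only [Pi.add_apply, Pi.smul_apply, Pi.zero_apply, smul_eq_mul]
        nlinarith
      have huγ : ρ u (a • β + a' • ρ u⁻¹ (sroot i)) ≤ 0 := by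
        rw [← hinvu, rho_inv_apply]
        exact hneg
      have hγSepu : a • β + a' • ρ u⁻¹ (sroot i) ∈ Sep ρ L u := ⟨hγRL, huγ⟩
      have hγSepw : a • β + a' • ρ u⁻¹ (sroot i) ∈ Sep ρ L w := by
        rw [hSep]
        exact hγSepu
      have hwγ : ρ w (a • β + a' • ρ u⁻¹ (sroot i)) ≤ 0 := hγSepw.2
      have hηPhi : ρ w (ρ u⁻¹ (sroot i)) ∈ Phi ρ := smul_mem_Phi hui w
      have hwγeq : ρ w (a • β + a' • ρ u⁻¹ (sroot i))
          = a • (-(sroot j)) + a' • ρ w (ρ u⁻¹ (sroot i)) := by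
        rw [map_add, map_smul, map_smul, hwβ]
      have hηns : ¬ (ρ w (ρ u⁻¹ (sroot i)) ≤ 0) := by
        intro hle
        apply hui_nSep
        have hmem : ρ u⁻¹ (sroot i) ∈ Sep ρ L w := ⟨hcond, hle⟩
        rw [hSep] at hmem
        exact hmem
      have hηpos : (0 : I → ℝ) ≤ ρ w (ρ u⁻¹ (sroot i)) :=
        (Phi_dichotomy hgeom hηPhi).resolve_right hηns
      clear hηns
      have hηk : ∀ k, k ≠ j → ρ w (ρ u⁻¹ (sroot i)) k = 0 := by
        intro k hk
        have h1 := hwγ k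
        rw [hwγeq] at h1
        have h2 := hηpos k
        simp only [Pi.add_apply, Pi.smul_apply, Pi.neg_apply, Pi.zero_apply, smul_eq_mul,
          sroot, Pi.single_eq_of_ne hk] at h1 h2 ⊢
        nlinarith
      have hηeq : ρ w (ρ u⁻¹ (sroot i)) = (ρ w (ρ u⁻¹ (sroot i)) j) • sroot j := by
        funext k
        by_cases hk : k = j
        · subst hk
          simp [sroot, Pi.single_eq_same]
        · rw [hηk k hk]
          simp [sroot, Pi.single_eq_of_ne hk]
      have hnorm : B (ρ w (ρ u⁻¹ (sroot i))) (ρ w (ρ u⁻¹ (sroot i))) = 1 :=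
        B_root_self hgeom hηPhi
      rw [hηeq] at hnorm
      simp only [map_smul, LinearMap.smul_apply, smul_eq_mul, B_diag hgeom j] at hnorm
      have hj0 : 0 ≤ ρ w (ρ u⁻¹ (sroot i)) j := by
        have := hηpos j
        simpa using this
      have hj1 : ρ w (ρ u⁻¹ (sroot i)) j = 1 := by nlinarith
      have hηeq2 : ρ w (ρ u⁻¹ (sroot i)) = sroot j := by
        rw [hηeq, hj1, one_smul]
      have hfin : ρ u⁻¹ (sroot i) = ρ w⁻¹ (sroot j) := by
        have h3 := congrArg (ρ w⁻¹) hηeq2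
        rwa [rho_inv_apply'] at h3
      exact final (by rw [hβeq, neg_neg, hfin])
  have htog : toggle ρ cs L i u
      = if ρ u⁻¹ (sroot i) ∈ RL ρ L then u else cs.simple i * u := rfl
  rw [htog, if_neg hnot]
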